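/- For every integer n ≥ 1, the cubic x³ − (n+1)x² − (n+3)x + (3n+2) has three real roots θ₁ > θ₂ > θ₃ satisfying θ₁ > θ₂ > φ⁻¹ > −1 > −φ > θ₃, and the multiset of eigenvalues of the adjacency matrix A(R̃_n), counted with multiplicity, consists of θ₁, θ₂, φ⁻¹, −φ and θ₃ each once, together with −1 with multiplicity n. For n = 0, the multiset of eigenvalues of A(R̃_0) = A(C₅) consists of 2 once and each of φ⁻¹ and −φ twice. -/

import Mathlib

/-- The 5-cycle `C₅` on `Fin 5`. -/
def cycle5 : SimpleGraph (Fin 5) :=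
  SimpleGraph.fromRel (fun i j => j = i + 1)

instance : DecidableRel cycle5.Adj := fun i j =>
  decidable_of_iff (i ≠ j ∧ (j = i + 1 ∨ i = j + 1)) Iff.rfl

/-- Duplicating the vertex `v'` of a simple graph `G`: a new vertex (the `Sum.inr` vertex) is
added, adjacent to `v'` and to every neighbor of `v'` in `G`. -/
def dupGraph {V : Type*} (G : SimpleGraph V) (v' : V) : SimpleGraph (V ⊕ Unit) where
  Adj x y :=
    match x, y with
    | Sum.inl a, Sum.inl b => G.Adj a b
    | Sum.inl a, Sum.inr _ => a = v' ∨ G.Adj a v'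
    | Sum.inr _, Sum.inl b => b = v' ∨ G.Adj b v'
    | Sum.inr _, Sum.inr _ => False
  symm := ⟨by
    rintro (a | a) (b | b) h
    · exact G.adj_symm h
    · exact h
    · exact h
    · exact h.elim⟩
  loopless := ⟨by
    rintro (a | a) h
    · exact G.ne_of_adj h rfl
    · exact h.elim⟩

instance dupGraphAdjDecidable {V : Type*} [DecidableEq V] (G : SimpleGraph V)
    [DecidableRel G.Adj] (v' : V) : DecidableRel (dupGraph G v').Adj := fun x y =>
  match x, y with
  | Sum.inl a, Sum.inl b => inferInstanceAs (Decidable (G.Adj a b))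
  | Sum.inl a, Sum.inr _ => inferInstanceAs (Decidable (a = v' ∨ G.Adj a v'))
  | Sum.inr _, Sum.inl b => inferInstanceAs (Decidable (b = v' ∨ G.Adj b v'))
  | Sum.inr _, Sum.inr _ => inferInstanceAs (Decidable False)

/-- The vertex type of the reseminant graph built from `C₅` by the duplications recorded in
the list `l` (each entry records which of the five original cycle vertices is duplicated). -/
def resemType : List (Fin 5) → Type
  | [] => Fin 5
  | _ :: l => resemType l ⊕ Unit

instance resemTypeFintype : ∀ l : List (Fin 5), Fintype (resemType l)
  | [] => inferInstanceAs (Fintype (Fin 5))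
  | _ :: l => letI := resemTypeFintype l; inferInstanceAs (Fintype (resemType l ⊕ Unit))

instance resemTypeDecEq : ∀ l : List (Fin 5), DecidableEq (resemType l)
  | [] => inferInstanceAs (DecidableEq (Fin 5))
  | _ :: l => letI := resemTypeDecEq l; inferInstanceAs (DecidableEq (resemType l ⊕ Unit))

/-- The copy, inside `resemType l`, of an original vertex of the 5-cycle. -/
def origVert : (l : List (Fin 5)) → Fin 5 → resemType l
  | [], i => i
  | _ :: l, i => Sum.inl (origVert l i)

/-- The reseminant graph obtained from the 5-cycle `C₅` by the finite sequence of vertex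
duplications recorded in `l`: for `l = v :: l'`, the vertex (the copy of the original cycle
vertex) `v` is duplicated in the graph built from `l'`. -/
def resemGraph : (l : List (Fin 5)) → SimpleGraph (resemType l)
  | [] => cycle5
  | v :: l => dupGraph (resemGraph l) (origVert l v)

instance resemGraphAdjDecidable : ∀ l : List (Fin 5), DecidableRel (resemGraph l).Adj
  | [] => inferInstanceAs (DecidableRel cycle5.Adj)
  | v :: l =>
    letI := resemGraphAdjDecidable l
    inferInstanceAs (DecidableRel (dupGraph (resemGraph l) (origVert l v)).Adj)

/-- A simple graph is *reseminant* if it is (isomorphic to) a graph obtained from the 5-cycle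
`C₅` by a finite sequence of vertex duplications, each duplicating one of the five original
cycle vertices. -/
def IsReseminant {V : Type*} (Γ : SimpleGraph V) : Prop :=
  ∃ l : List (Fin 5), Nonempty (Γ ≃g resemGraph l)

/-- `R̃_n`: the reseminant graph on `n + 5` vertices obtained from `C₅` by `n` successive
duplications, all duplicating the same fixed vertex `0` of the original 5-cycle. -/
def tildeR (n : ℕ) : SimpleGraph (resemType (List.replicate n 0)) :=
  resemGraph (List.replicate n 0)

instance (n : ℕ) : DecidableRel (tildeR n).Adj :=
  resemGraphAdjDecidable (List.replicate n 0)

/-- The golden ratio `φ = (1 + √5)/2`. -/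
noncomputable def goldenRatio' : ℝ := (1 + Real.sqrt 5) / 2

-- ### model

abbrev Jtype (n : ℕ) := Fin n ⊕ (Unit ⊕ Fin 4)

def Madj (n : ℕ) : Jtype n → Jtype n → Prop := fun x y =>
  match x, y with
  | .inl i, .inl j => i ≠ j
  | .inl _, .inr (.inl _) => True
  | .inr (.inl _), .inl _ => True
  | .inr (.inl _), .inr (.inl _) => False
  | .inl _, .inr (.inr p) => p = 0 ∨ p = 3
  | .inr (.inr p), .inl _ => p = 0 ∨ p = 3
  | .inr (.inl _), .inr (.inr p) => p = 0 ∨ p = 3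
  | .inr (.inr p), .inr (.inl _) => p = 0 ∨ p = 3
  | .inr (.inr p), .inr (.inr q) => p.val + 1 = q.val ∨ q.val + 1 = p.val

instance MadjDec (n : ℕ) : DecidableRel (Madj n) := fun x y =>
  match x, y with
  | .inl i, .inl j => inferInstanceAs (Decidable (i ≠ j))
  | .inl _, .inr (.inl _) => inferInstanceAs (Decidable True)
  | .inr (.inl _), .inl _ => inferInstanceAs (Decidable True)
  | .inr (.inl _), .inr (.inl _) => inferInstanceAs (Decidable False)
  | .inl _, .inr (.inr p) => inferInstanceAs (Decidable (p = 0 ∨ p = 3))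
  | .inr (.inr p), .inl _ => inferInstanceAs (Decidable (p = 0 ∨ p = 3))
  | .inr (.inl _), .inr (.inr p) => inferInstanceAs (Decidable (p = 0 ∨ p = 3))
  | .inr (.inr p), .inr (.inl _) => inferInstanceAs (Decidable (p = 0 ∨ p = 3))
  | .inr (.inr p), .inr (.inr q) =>
      inferInstanceAs (Decidable (p.val + 1 = q.val ∨ q.val + 1 = p.val))

/-- the special clique vertex (the original vertex 0) -/
abbrev v0 (n : ℕ) : Jtype n := Sum.inr (Sum.inl ())

def shuffle (n : ℕ) : (Jtype n ⊕ Unit) ≃ Jtype (n + 1) where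
  toFun x :=
    match x with
    | .inl (.inl k) => .inl k.castSucc
    | .inl (.inr z) => .inr z
    | .inr _ => .inl (Fin.last n)
  invFun y :=
    match y with
    | .inl k => Fin.lastCases (Sum.inr ()) (fun k => Sum.inl (Sum.inl k)) k
    | .inr z => .inl (.inr z)
  left_inv := by
    rintro ((k | z) | ⟨⟩) <;> simp
  right_inv := by
    rintro (k | z)
    · induction k using Fin.lastCases with
      | last => simp
      | cast k => simp
    · rfl

def e0five : Fin 5 ≃ Jtype 0 where
  toFun := ![Sum.inr (Sum.inl ()), Sum.inr (Sum.inr 0), Sum.inr (Sum.inr 1),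
    Sum.inr (Sum.inr 2), Sum.inr (Sum.inr 3)]
  invFun := Sum.elim Fin.elim0 (Sum.elim (fun _ => 0) ![1, 2, 3, 4])
  left_inv := by decide
  right_inv := by decide

lemma castSucc_ne_last' {n : ℕ} (k : Fin n) : k.castSucc ≠ Fin.last n :=
  (Fin.castSucc_lt_last k).ne

lemma last_ne_castSucc' {n : ℕ} (k : Fin n) : Fin.last n ≠ k.castSucc :=
  (Fin.castSucc_lt_last k).ne'

def fEquiv : (n : ℕ) → resemType (List.replicate n 0) ≃ Jtype n
  | 0 => e0five
  | n + 1 =>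
      (Equiv.sumCongr (fEquiv n) (Equiv.refl Unit)).trans (shuffle n)

lemma fEquiv_origVert (n : ℕ) : fEquiv n (origVert (List.replicate n 0) 0) = v0 n := by
  induction n with
  | zero => decide
  | succ n ih =>
      show shuffle n (Sum.map (fEquiv n) id (Sum.inl (origVert (List.replicate n 0) 0))) = _
      rw [Sum.map_inl, ih]
      rfl

lemma adj_transfer (n : ℕ) (x y : resemType (List.replicate n 0)) :
    (tildeR n).Adj x y ↔ Madj n (fEquiv n x) (fEquiv n y) := by
  induction n with
  | zero => revert x y; decide
  | succ n ih =>
      have hbase := fEquiv_origVert n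
      -- tildeR (n+1) = dupGraph (tildeR n) (origVert _ 0)
      rcases x with x | ⟨⟩ <;> rcases y with y | ⟨⟩
      · show (tildeR n).Adj x y ↔ _
        rw [ih]
        show _ ↔ Madj (n+1) (shuffle n (.inl (fEquiv n x))) (shuffle n (.inl (fEquiv n y)))
        rcases hx : fEquiv n x with k | (⟨⟩ | p) <;> rcases hy : fEquiv n y with m | (⟨⟩ | q) <;>
          simp [shuffle, Madj, Fin.castSucc_inj, castSucc_ne_last', last_ne_castSucc']
      · show (x = origVert (List.replicate n 0) 0 ∨
            (tildeR n).Adj x (origVert (List.replicate n 0) 0)) ↔ _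
        rw [ih, hbase]
        show _ ↔ Madj (n+1) (shuffle n (.inl (fEquiv n x))) (shuffle n (.inr ()))
        have hx0 : x = origVert (List.replicate n 0) 0 ↔ fEquiv n x = v0 n := by
          rw [← hbase]; exact ⟨fun h => by rw [h], fun h => (fEquiv n).injective h⟩
        rw [hx0]
        rcases hx : fEquiv n x with k | (⟨⟩ | p) <;>
          simp [shuffle, Madj, castSucc_ne_last', last_ne_castSucc']
      · show (y = origVert (List.replicate n 0) 0 ∨
            (tildeR n).Adj y (origVert (List.replicate n 0) 0)) ↔ _
        rw [ih, hbase]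
        show _ ↔ Madj (n+1) (shuffle n (.inr ())) (shuffle n (.inl (fEquiv n y)))
        have hy0 : y = origVert (List.replicate n 0) 0 ↔ fEquiv n y = v0 n := by
          rw [← hbase]; exact ⟨fun h => by rw [h], fun h => (fEquiv n).injective h⟩
        rw [hy0]
        rcases hy : fEquiv n y with k | (⟨⟩ | p) <;>
          simp [shuffle, Madj, castSucc_ne_last', last_ne_castSucc']
      · show False ↔ _
        show _ ↔ Madj (n+1) (shuffle n (.inr ())) (shuffle n (.inr ()))
        simp [shuffle, Madj]

noncomputable section
open Polynomial Matrix

def Mmat (n : ℕ) : Matrix (Jtype n) (Jtype n) ℝ := fun x y => if Madj n x y then 1 else 0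

lemma adjMatrix_eq (n : ℕ) :
    (tildeR n).adjMatrix ℝ = (Mmat n).submatrix (fEquiv n) (fEquiv n) := by
  ext x y
  simp [Mmat, SimpleGraph.adjMatrix_apply, adj_transfer, Matrix.submatrix_apply]

lemma charpoly_transfer (n : ℕ) :
    ((tildeR n).adjMatrix ℝ).charpoly = (Mmat n).charpoly := by
  rw [adjMatrix_eq]
  have : (Mmat n).submatrix (fEquiv n) (fEquiv n)
      = Matrix.reindex (fEquiv n).symm (fEquiv n).symm (Mmat n) := by
    ext x y; simp
  rw [this, Matrix.charpoly_reindex]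

def Lmat (n : ℕ) : Matrix (Jtype n) (Jtype n) ℝ[X] :=
  Matrix.fromBlocks 1 (fun _ c => if c = Sum.inl () then -1 else 0) 0 1

def Umat (n : ℕ) : Matrix (Jtype n) (Jtype n) ℝ[X] :=
  Matrix.fromBlocks 1 (fun _ c => if c = Sum.inl () then 1 else 0) 0 1

lemma det_Lmat (n : ℕ) : (Lmat n).det = 1 := by
  rw [Lmat]
  exact (Matrix.det_fromBlocks_zero₂₁ (1 : Matrix (Fin n) (Fin n) ℝ[X]) _ 1).trans
    (by rw [Matrix.det_one, Matrix.det_one, one_mul])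

lemma det_Umat (n : ℕ) : (Umat n).det = 1 := by
  rw [Umat]
  exact (Matrix.det_fromBlocks_zero₂₁ (1 : Matrix (Fin n) (Fin n) ℝ[X]) _ 1).trans
    (by rw [Matrix.det_one, Matrix.det_one, one_mul])

lemma Lmat_mul_inl (n : ℕ) (A : Matrix (Jtype n) (Jtype n) ℝ[X]) (d : Fin n) (j : Jtype n) :
    (Lmat n * A) (Sum.inl d) j = A (Sum.inl d) j - A (v0 n) j := by
  rw [Matrix.mul_apply, Fintype.sum_sum_type]
  simp [Lmat, Matrix.fromBlocks, Matrix.one_apply, ite_mul, Fintype.sum_sum_type]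
  ring

lemma Lmat_mul_inr (n : ℕ) (A : Matrix (Jtype n) (Jtype n) ℝ[X]) (c : Unit ⊕ Fin 4)
    (j : Jtype n) : (Lmat n * A) (Sum.inr c) j = A (Sum.inr c) j := by
  rw [Matrix.mul_apply, Fintype.sum_sum_type]
  simp [Lmat, Matrix.fromBlocks, Matrix.one_apply, ite_mul, Fintype.sum_sum_type]

lemma mul_Umat_inl (n : ℕ) (A : Matrix (Jtype n) (Jtype n) ℝ[X]) (i : Jtype n) (d : Fin n) :
    (A * Umat n) i (Sum.inl d) = A i (Sum.inl d) := by
  rw [Matrix.mul_apply, Fintype.sum_sum_type]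
  simp [Umat, Matrix.fromBlocks, Matrix.one_apply, mul_ite, Fintype.sum_sum_type]

lemma mul_Umat_inr_inr (n : ℕ) (A : Matrix (Jtype n) (Jtype n) ℝ[X]) (i : Jtype n) (p : Fin 4) :
    (A * Umat n) i (Sum.inr (Sum.inr p)) = A i (Sum.inr (Sum.inr p)) := by
  rw [Matrix.mul_apply, Fintype.sum_sum_type]
  simp [Umat, Matrix.fromBlocks, Matrix.one_apply, mul_ite, Fintype.sum_sum_type]

lemma mul_Umat_v0 (n : ℕ) (A : Matrix (Jtype n) (Jtype n) ℝ[X]) (i : Jtype n) :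
    (A * Umat n) i (v0 n) = A i (v0 n) + ∑ d : Fin n, A i (Sum.inl d) := by
  rw [Matrix.mul_apply, Fintype.sum_sum_type]
  simp [Umat, Matrix.fromBlocks, Matrix.one_apply, mul_ite, Fintype.sum_sum_type]
  ring

def Cb (n : ℕ) : Matrix (Unit ⊕ Fin 4) (Fin n) ℝ[X] := fun c _ =>
  match c with
  | .inl _ => -1
  | .inr p => if p = 0 ∨ p = 3 then -1 else 0

def D5 (n : ℕ) : Matrix (Unit ⊕ Fin 4) (Unit ⊕ Fin 4) ℝ[X] := fun a b =>
  match a, b with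
  | .inl _, .inl _ => X - C (n : ℝ)
  | .inl _, .inr p => if p = 0 ∨ p = 3 then -1 else 0
  | .inr p, .inl _ => if p = 0 ∨ p = 3 then -(C (n : ℝ) + 1) else 0
  | .inr p, .inr q => if p = q then X else if p.val + 1 = q.val ∨ q.val + 1 = p.val then -1 else 0

lemma charmatrix_Mmat_apply (n : ℕ) (i j : Jtype n) :
    charmatrix (Mmat n) i j
      = (if i = j then X else 0) - (if Madj n i j then 1 else 0) := by
  rcases eq_or_ne i j with rfl | h
  · simp [Matrix.charmatrix_apply_eq, Mmat, apply_ite (C : ℝ → ℝ[X])]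
  · simp [Matrix.charmatrix_apply_ne _ _ _ h, Mmat, apply_ite (C : ℝ → ℝ[X]), h]

lemma LNU (n : ℕ) :
    Lmat n * charmatrix (Mmat n) * Umat n
      = Matrix.fromBlocks ((X + 1 : ℝ[X]) • 1) 0 (Cb n) (D5 n) := by
  have hC : ∀ b : Prop, ∀ _ : Decidable b,
      (C : ℝ → ℝ[X]) (if b then 1 else 0) = if b then 1 else 0 := by
    intro b hb; split <;> simp
  refine Matrix.ext fun i j => ?_
  rcases j with d' | (⟨⟩ | q)
  · rw [mul_Umat_inl]
    rcases i with d | (⟨⟩ | p)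
    · rw [Lmat_mul_inl]
      rcases eq_or_ne d d' with rfl | h
      · simp [charmatrix_Mmat_apply, Mmat, Madj, apply_ite (C : ℝ → ℝ[X]), _root_.map_one, _root_.map_zero, Matrix.fromBlocks, Matrix.one_apply]
      · simp [charmatrix_Mmat_apply, Mmat, Madj, apply_ite (C : ℝ → ℝ[X]), _root_.map_one, _root_.map_zero, Matrix.fromBlocks, Matrix.one_apply, h, Ne.symm h]
    · rw [Lmat_mul_inr]
      simp [charmatrix_Mmat_apply, Mmat, Madj, apply_ite (C : ℝ → ℝ[X]), _root_.map_one, _root_.map_zero, Cb]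
    · rw [Lmat_mul_inr]
      by_cases hp : p = 0 ∨ p = 3 <;>
        simp [charmatrix_Mmat_apply, Mmat, Madj, apply_ite (C : ℝ → ℝ[X]), _root_.map_one, _root_.map_zero, Cb, hp]
  · show _ = Matrix.fromBlocks ((X + 1 : ℝ[X]) • 1) 0 (Cb n) (D5 n) i (v0 n)
    rw [mul_Umat_v0]
    rcases i with d | (⟨⟩ | p)
    · have hrow : ∀ k : Jtype n, (Lmat n * charmatrix (Mmat n)) (Sum.inl d) k
          = charmatrix (Mmat n) (Sum.inl d) k - charmatrix (Mmat n) (v0 n) k :=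
        fun k => Lmat_mul_inl n _ d k
      rw [hrow, Finset.sum_congr rfl (fun d' _ => hrow (Sum.inl d'))]
      have hsum : ∑ d' : Fin n,
          (charmatrix (Mmat n) (Sum.inl d) (Sum.inl d') -
            charmatrix (Mmat n) (v0 n) (Sum.inl d'))
          = X + 1 := by
        have : ∀ d' : Fin n,
            charmatrix (Mmat n) (Sum.inl d) (Sum.inl d') -
              charmatrix (Mmat n) (v0 n) (Sum.inl d')
            = if d = d' then X + 1 else 0 := by
          intro d'
          rcases eq_or_ne d d' with rfl | h
          · simp [charmatrix_Mmat_apply, Mmat, Madj, apply_ite (C : ℝ → ℝ[X]), _root_.map_one, _root_.map_zero]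
          · simp [charmatrix_Mmat_apply, Mmat, Madj, apply_ite (C : ℝ → ℝ[X]), _root_.map_one, _root_.map_zero, h]
        rw [Finset.sum_congr rfl (fun d' _ => this d')]
        simp
      rw [hsum]
      simp [charmatrix_Mmat_apply, Mmat, Madj, apply_ite (C : ℝ → ℝ[X]), _root_.map_one, _root_.map_zero, Matrix.fromBlocks]
      ring
    · have hrow : ∀ k, (Lmat n * charmatrix (Mmat n)) (v0 n) k
          = charmatrix (Mmat n) (v0 n) k := fun k => Lmat_mul_inr n _ _ k
      rw [hrow, Finset.sum_congr rfl (fun d' _ => hrow (Sum.inl d'))]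
      have hsum : ∑ d' : Fin n, charmatrix (Mmat n) (v0 n) (Sum.inl d') = -(n : ℝ[X]) := by
        have : ∀ d' : Fin n, charmatrix (Mmat n) (v0 n) (Sum.inl d') = -1 := by
          intro d'; simp [charmatrix_Mmat_apply, Mmat, Madj, apply_ite (C : ℝ → ℝ[X]), _root_.map_one, _root_.map_zero]
        rw [Finset.sum_congr rfl (fun d' _ => this d')]
        simp [mul_comm]
      rw [hsum]
      simp [charmatrix_Mmat_apply, Mmat, Madj, apply_ite (C : ℝ → ℝ[X]), _root_.map_one, _root_.map_zero, Matrix.fromBlocks, D5, Polynomial.C_eq_natCast, sub_eq_add_neg]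
    · have hrow : ∀ k, (Lmat n * charmatrix (Mmat n)) (Sum.inr (Sum.inr p)) k
          = charmatrix (Mmat n) (Sum.inr (Sum.inr p)) k := fun k => Lmat_mul_inr n _ _ k
      rw [hrow, Finset.sum_congr rfl (fun d' _ => hrow (Sum.inl d'))]
      by_cases hp : p = 0 ∨ p = 3
      · have hsum : ∑ d' : Fin n,
            charmatrix (Mmat n) (Sum.inr (Sum.inr p)) (Sum.inl d') = -(n : ℝ[X]) := by
          have : ∀ d' : Fin n,
              charmatrix (Mmat n) (Sum.inr (Sum.inr p)) (Sum.inl d') = -1 := by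
            intro d'; simp [charmatrix_Mmat_apply, Mmat, Madj, apply_ite (C : ℝ → ℝ[X]), _root_.map_one, _root_.map_zero, hp]
          rw [Finset.sum_congr rfl (fun d' _ => this d')]
          simp [mul_comm]
        rw [hsum]
        simp [charmatrix_Mmat_apply, Mmat, Madj, apply_ite (C : ℝ → ℝ[X]), _root_.map_one, _root_.map_zero, Matrix.fromBlocks, D5, hp, Polynomial.C_eq_natCast]
        try ring
      · have hsum : ∑ d' : Fin n,
            charmatrix (Mmat n) (Sum.inr (Sum.inr p)) (Sum.inl d') = 0 := by
          have : ∀ d' : Fin n,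
              charmatrix (Mmat n) (Sum.inr (Sum.inr p)) (Sum.inl d') = 0 := by
            intro d'; simp [charmatrix_Mmat_apply, Mmat, Madj, apply_ite (C : ℝ → ℝ[X]), _root_.map_one, _root_.map_zero, hp]
          rw [Finset.sum_congr rfl (fun d' _ => this d')]
          simp
        rw [hsum]
        simp [charmatrix_Mmat_apply, Mmat, Madj, apply_ite (C : ℝ → ℝ[X]), _root_.map_one, _root_.map_zero, Matrix.fromBlocks, D5, hp]
  · rw [mul_Umat_inr_inr]
    rcases i with d | (⟨⟩ | p)
    · rw [Lmat_mul_inl]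
      by_cases hq : q = 0 ∨ q = 3 <;>
        simp [charmatrix_Mmat_apply, Mmat, Madj, apply_ite (C : ℝ → ℝ[X]), _root_.map_one, _root_.map_zero, Matrix.fromBlocks, hq]
    · rw [Lmat_mul_inr]
      by_cases hq : q = 0 ∨ q = 3 <;>
        simp [charmatrix_Mmat_apply, Mmat, Madj, apply_ite (C : ℝ → ℝ[X]), _root_.map_one, _root_.map_zero, Matrix.fromBlocks, D5, hq]
    · rw [Lmat_mul_inr]
      rcases eq_or_ne p q with rfl | h
      · simp [charmatrix_Mmat_apply, Mmat, Madj, apply_ite (C : ℝ → ℝ[X]), _root_.map_one, _root_.map_zero, Matrix.fromBlocks, D5]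
      · by_cases hadj : p.val + 1 = q.val ∨ q.val + 1 = p.val <;>
          simp [charmatrix_Mmat_apply, Mmat, Madj, apply_ite (C : ℝ → ℝ[X]), _root_.map_one, _root_.map_zero, Matrix.fromBlocks, D5, h, hadj]

lemma charpoly_Mmat (n : ℕ) : (Mmat n).charpoly = (X + 1 : ℝ[X]) ^ n * (D5 n).det := by
  have h1 : (Mmat n).charpoly = (Lmat n * charmatrix (Mmat n) * Umat n).det := by
    rw [Matrix.det_mul, Matrix.det_mul, det_Lmat, det_Umat, one_mul, mul_one]
    rfl
  rw [h1, LNU, Matrix.det_fromBlocks_zero₁₂, Matrix.det_smul, Matrix.det_one, mul_one,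
    Fintype.card_fin]

def e5 : Fin 5 ≃ (Unit ⊕ Fin 4) where
  toFun := ![Sum.inl (), Sum.inr 0, Sum.inr 1, Sum.inr 2, Sum.inr 3]
  invFun := Sum.elim (fun _ => 0) ![1, 2, 3, 4]
  left_inv := by decide
  right_inv := by decide

lemma D5_det (n : ℕ) :
    (D5 n).det = (X ^ 2 + X - 1) *
      (X ^ 3 - (C (n : ℝ) + 1) * X ^ 2 - (C (n : ℝ) + 3) * X + (3 * C (n : ℝ) + 2)) := by
  have hsub : (D5 n).submatrix e5 e5 =
      !![X - C (n : ℝ), -1, 0, 0, -1;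
         -(C (n : ℝ) + 1), X, -1, 0, 0;
         0, -1, X, -1, 0;
         0, 0, -1, X, -1;
         -(C (n : ℝ) + 1), 0, 0, -1, X] := by
    refine Matrix.ext fun i j => ?_
    fin_cases i <;> fin_cases j <;> norm_num [D5, e5, Fin.ext_iff, show ((3:Fin 4):ℕ) = 3 from rfl, Matrix.vecHead, Matrix.vecTail]
  rw [← Matrix.det_submatrix_equiv_self e5, hsub]
  simp [Matrix.det_succ_row_zero, Fin.sum_univ_succ, Fin.succAbove, Fin.castSucc,
    Fin.castAdd, Fin.castLE]
  ring

lemma sqrt5_sq : Real.sqrt 5 ^ 2 = 5 := Real.sq_sqrt (by norm_num)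

lemma sqrt5_lt_3 : Real.sqrt 5 < 3 := by
  nlinarith [Real.sqrt_nonneg 5, sqrt5_sq]

lemma one_lt_sqrt5 : 1 < Real.sqrt 5 := by
  nlinarith [Real.sqrt_nonneg 5, sqrt5_sq]

lemma g5_gold_pos : 0 < goldenRatio' := by
  unfold goldenRatio'; nlinarith [one_lt_sqrt5]

lemma g5_gold_gt_one : 1 < goldenRatio' := by
  unfold goldenRatio'; nlinarith [one_lt_sqrt5]

lemma g5_gold_lt_two : goldenRatio' < 2 := by
  unfold goldenRatio'; nlinarith [sqrt5_lt_3]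

lemma g5_gold_inv : goldenRatio'⁻¹ = goldenRatio' - 1 := by
  refine (eq_inv_of_mul_eq_one_left ?_).symm
  unfold goldenRatio'
  linear_combination (1/4 : ℝ) * sqrt5_sq

lemma g5_gold_inv_quad : goldenRatio'⁻¹ ^ 2 + goldenRatio'⁻¹ - 1 = 0 := by
  rw [g5_gold_inv]; unfold goldenRatio'; linear_combination (1/4 : ℝ) * sqrt5_sq

lemma g5_neg_gold_quad : (-goldenRatio') ^ 2 + (-goldenRatio') - 1 = 0 := by
  unfold goldenRatio'; linear_combination (1/4 : ℝ) * sqrt5_sq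

lemma g5_gold_inv_pos : 0 < goldenRatio'⁻¹ := inv_pos.2 g5_gold_pos

lemma g5_gold_inv_lt_two : goldenRatio'⁻¹ < 2 := by
  rw [g5_gold_inv]; linarith [g5_gold_lt_two]

/-- IVT helpers -/
lemma root_between_decr {f : ℝ → ℝ} (hc : Continuous f) {x y : ℝ} (hxy : x ≤ y)
    (hx : 0 < f x) (hy : f y < 0) : ∃ z, x < z ∧ z < y ∧ f z = 0 := by
  obtain ⟨z, hz, hz0⟩ := intermediate_value_Icc' hxy hc.continuousOn
    (Set.mem_Icc.mpr ⟨hy.le, hx.le⟩)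
  exact ⟨z, lt_of_le_of_ne hz.1 (fun h => by rw [← h] at hz0; exact hx.ne' hz0),
    lt_of_le_of_ne hz.2 (fun h => by rw [h] at hz0; exact hy.ne hz0), hz0⟩

lemma root_between_incr {f : ℝ → ℝ} (hc : Continuous f) {x y : ℝ} (hxy : x ≤ y)
    (hx : f x < 0) (hy : 0 < f y) : ∃ z, x < z ∧ z < y ∧ f z = 0 := by
  obtain ⟨z, hz, hz0⟩ := intermediate_value_Icc hxy hc.continuousOn
    (Set.mem_Icc.mpr ⟨hx.le, hy.le⟩)
  exact ⟨z, lt_of_le_of_ne hz.1 (fun h => by rw [← h] at hz0; exact hx.ne hz0),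
    lt_of_le_of_ne hz.2 (fun h => by rw [h] at hz0; exact hy.ne' hz0), hz0⟩

def pf (m : ℝ) : ℝ → ℝ := fun x => x ^ 3 - (m + 1) * x ^ 2 - (m + 3) * x + (3 * m + 2)

lemma pf_cont (m : ℝ) : Continuous (pf m) := by unfold pf; fun_prop

lemma pf_quadroot (m t : ℝ) (ht : t ^ 2 + t - 1 = 0) : pf m t = 2 * m := by
  unfold pf; linear_combination (t - (m + 2)) * ht

lemma exists_three_roots (m : ℝ) (hm : 1 ≤ m) :
    ∃ θ₁ θ₂ θ₃ : ℝ, pf m θ₁ = 0 ∧ pf m θ₂ = 0 ∧ pf m θ₃ = 0 ∧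
      2 < θ₁ ∧ goldenRatio'⁻¹ < θ₂ ∧ θ₂ < 2 ∧ θ₃ < -goldenRatio' := by
  have h2 : pf m 2 = -(3 * m) := by unfold pf; ring
  have h2neg : pf m 2 < 0 := by rw [h2]; linarith
  have htop : 0 < pf m (m + 3) := by
    have : pf m (m + 3) = (m + 3) ^ 2 + 3 * m + 2 := by unfold pf; ring
    nlinarith
  have hbot : pf m (-(m + 3)) < 0 := by
    have : pf m (-(m + 3)) = -((m + 3) ^ 2 * (2 * m + 3)) + 3 * m + 2 := by unfold pf; ring
    nlinarith
  have hainv : 0 < pf m goldenRatio'⁻¹ := by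
    rw [pf_quadroot m _ g5_gold_inv_quad]; linarith
  have hbneg : 0 < pf m (-goldenRatio') := by
    rw [pf_quadroot m _ g5_neg_gold_quad]; linarith
  obtain ⟨θ₁, hθ₁a, _, hθ₁⟩ := root_between_incr (pf_cont m) (by linarith : (2:ℝ) ≤ m + 3)
    h2neg htop
  obtain ⟨θ₂, hθ₂a, hθ₂b, hθ₂⟩ := root_between_decr (pf_cont m)
    (by linarith [g5_gold_inv_lt_two] : goldenRatio'⁻¹ ≤ 2) hainv h2neg
  obtain ⟨θ₃, _, hθ₃b, hθ₃⟩ := root_between_incr (pf_cont m)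
    (by linarith [g5_gold_lt_two] : -(m + 3) ≤ -goldenRatio') hbot hbneg
  exact ⟨θ₁, θ₂, θ₃, hθ₁, hθ₂, hθ₃, hθ₁a, hθ₂a, hθ₂b, hθ₃b⟩

lemma cubic_factor (m θ₁ θ₂ θ₃ : ℝ) (h1 : pf m θ₁ = 0) (h2 : pf m θ₂ = 0)
    (h3 : pf m θ₃ = 0) (d12 : θ₁ ≠ θ₂) (d13 : θ₁ ≠ θ₃) (d23 : θ₂ ≠ θ₃) :
    (X ^ 3 - C (m + 1) * X ^ 2 - C (m + 3) * X + C (3 * m + 2) : ℝ[X])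
      = (X - C θ₁) * (X - C θ₂) * (X - C θ₃) := by
  set P : ℝ[X] := X ^ 3 - C (m + 1) * X ^ 2 - C (m + 3) * X + C (3 * m + 2) with hP
  have hmonic : P.Monic := by
    have hre : P = X ^ 3 + (-(C (m + 1)) * X ^ 2 - C (m + 3) * X + C (3 * m + 2)) := by
      rw [hP]; ring
    rw [hre]
    refine Polynomial.monic_X_pow_add (lt_of_le_of_lt (by compute_degree) ?_)
    norm_num
  have hdeg : P.natDegree = 3 := by rw [hP]; compute_degree!
  have hmem : ∀ θ, pf m θ = 0 → θ ∈ P.roots := by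
    intro θ h
    rw [Polynomial.mem_roots hmonic.ne_zero]
    simpa [hP, Polynomial.IsRoot, pf] using h
  have hroots : P.roots = {θ₁, θ₂, θ₃} := by
    refine (Multiset.eq_of_le_of_card_le ?_ ?_).symm
    · rw [Multiset.le_iff_subset (by simp [d12, d13, d23])]
      intro x hx
      simp only [Multiset.insert_eq_cons, Multiset.mem_cons, Multiset.mem_singleton] at hx
      rcases hx with rfl | rfl | rfl
      exacts [hmem _ h1, hmem _ h2, hmem _ h3]
    · have := P.card_roots'
      rw [hdeg] at this
      simpa using this
  have hprod := Polynomial.prod_multiset_X_sub_C_of_monic_of_roots_card_eq hmonic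
    (by rw [hroots, hdeg]; rfl)
  rw [hroots] at hprod
  rw [← hprod]
  simp only [Multiset.insert_eq_cons, Multiset.map_cons, Multiset.prod_cons,
    Multiset.map_singleton, Multiset.prod_singleton]
  ring

lemma quad_factor :
    (X ^ 2 + X - 1 : ℝ[X]) = (X - C goldenRatio'⁻¹) * (X - C (-goldenRatio')) := by
  have h1 : goldenRatio'⁻¹ + -goldenRatio' = -1 := by rw [g5_gold_inv]; ring
  have h2 : goldenRatio'⁻¹ * -goldenRatio' = -1 := by
    rw [g5_gold_inv]; unfold goldenRatio'; linear_combination (-1/4 : ℝ) * sqrt5_sq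
  have expand : ∀ a b : ℝ, (X - C a) * (X - C b) = X ^ 2 - C (a + b) * X + C (a * b) := by
    intro a b; rw [C_add, C_mul]; ring
  rw [expand, h1, h2, _root_.map_neg, _root_.map_one]; ring

lemma cubic0_factor :
    (X ^ 3 - C (0 + 1 : ℝ) * X ^ 2 - C (0 + 3 : ℝ) * X + C (3 * 0 + 2 : ℝ) : ℝ[X])
      = (X - C (2:ℝ)) * (X ^ 2 + X - 1) := by
  rw [show (C (0 + 1 : ℝ) : ℝ[X]) = 1 by norm_num,
    show (C (0 + 3 : ℝ) : ℝ[X]) = 3 by rw [show (0 + 3 : ℝ) = 3 by norm_num]; exact _root_.map_ofNat C 3,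
    show (C (3 * 0 + 2 : ℝ) : ℝ[X]) = 2 by rw [show (3 * 0 + 2 : ℝ) = 2 by norm_num]; exact _root_.map_ofNat C 2,
    show (C (2 : ℝ) : ℝ[X]) = 2 from _root_.map_ofNat C 2]
  ring

lemma charpoly_tildeR (n : ℕ) :
    ((tildeR n).adjMatrix ℝ).charpoly
      = (X + 1 : ℝ[X]) ^ n * ((X ^ 2 + X - 1) *
        (X ^ 3 - C ((n:ℝ) + 1) * X ^ 2 - C ((n:ℝ) + 3) * X + C (3 * (n:ℝ) + 2))) := by
  rw [charpoly_transfer, charpoly_Mmat, D5_det]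
  rw [show (C ((n:ℝ) + 1) : ℝ[X]) = C (n:ℝ) + 1 by rw [_root_.map_add, _root_.map_one],
    show (C ((n:ℝ) + 3) : ℝ[X]) = C (n:ℝ) + 3 by rw [_root_.map_add, _root_.map_ofNat],
    show (C (3 * (n:ℝ) + 2) : ℝ[X]) = 3 * C (n:ℝ) + 2 by rw [_root_.map_add, _root_.map_mul, _root_.map_ofNat, _root_.map_ofNat]]

/-- For every integer `n ≥ 1`, the cubic
`x³ − (n+1)x² − (n+3)x + (3n+2)` has three real roots `θ₁ > θ₂ > θ₃` satisfying
`θ₁ > θ₂ > φ⁻¹ > −1 > −φ > θ₃`, and the multiset of eigenvalues of `A(R̃_n)`, counted with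
multiplicity (the multiset of roots of the characteristic polynomial), consists of `θ₁`, `θ₂`,
`φ⁻¹`, `−φ` and `θ₃` each once, together with `−1` with multiplicity `n`. For `n = 0`, the
multiset of eigenvalues of `A(R̃_0) = A(C₅)` consists of `2` once and each of `φ⁻¹` and `−φ`
twice. -/
theorem spectrum_tildeR :
    (∀ n : ℕ, 1 ≤ n → ∃ θ₁ θ₂ θ₃ : ℝ,
      (∀ x : ℝ, x ^ 3 - ((n : ℝ) + 1) * x ^ 2 - ((n : ℝ) + 3) * x + (3 * (n : ℝ) + 2) =
        (x - θ₁) * (x - θ₂) * (x - θ₃)) ∧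
      θ₂ < θ₁ ∧ goldenRatio'⁻¹ < θ₂ ∧ (-1 : ℝ) < goldenRatio'⁻¹ ∧
      -goldenRatio' < (-1 : ℝ) ∧ θ₃ < -goldenRatio' ∧
      ((tildeR n).adjMatrix ℝ).charpoly.roots =
        θ₁ ::ₘ θ₂ ::ₘ goldenRatio'⁻¹ ::ₘ (-goldenRatio') ::ₘ θ₃ ::ₘ
          Multiset.replicate n (-1)) ∧
    ((tildeR 0).adjMatrix ℝ).charpoly.roots =
      2 ::ₘ goldenRatio'⁻¹ ::ₘ goldenRatio'⁻¹ ::ₘ (-goldenRatio') ::ₘ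
        (-goldenRatio') ::ₘ 0 := by
  constructor
  · intro n hn
    obtain ⟨θ₁, θ₂, θ₃, r1, r2, r3, b1, b2, b3, b4⟩ :=
      exists_three_roots (n : ℝ) (by exact_mod_cast hn)
    have hga : (0:ℝ) < goldenRatio'⁻¹ := g5_gold_inv_pos
    have hg1 : (1:ℝ) < goldenRatio' := g5_gold_gt_one
    have d12 : θ₁ ≠ θ₂ := by linarith
    have d13 : θ₁ ≠ θ₃ := by linarith
    have d23 : θ₂ ≠ θ₃ := by linarith
    have hfact := cubic_factor (n : ℝ) θ₁ θ₂ θ₃ r1 r2 r3 d12 d13 d23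
    refine ⟨θ₁, θ₂, θ₃, ?_, by linarith, by linarith, by linarith, by linarith, by linarith, ?_⟩
    · intro x
      have := congrArg (Polynomial.eval x) hfact
      simpa using this
    · have hform : ((tildeR n).adjMatrix ℝ).charpoly
          = ((θ₁ ::ₘ θ₂ ::ₘ goldenRatio'⁻¹ ::ₘ (-goldenRatio') ::ₘ θ₃ ::ₘ
              Multiset.replicate n (-1)).map fun a => (X : ℝ[X]) - C a).prod := by
        rw [charpoly_tildeR n, hfact, quad_factor]
        simp only [Multiset.map_cons, Multiset.prod_cons, Multiset.map_replicate,
          Multiset.prod_replicate, _root_.map_neg, _root_.map_one, sub_neg_eq_add]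
        ring
      rw [hform, Polynomial.roots_multiset_prod_X_sub_C]
  · have hform : ((tildeR 0).adjMatrix ℝ).charpoly
        = (((2:ℝ) ::ₘ goldenRatio'⁻¹ ::ₘ goldenRatio'⁻¹ ::ₘ (-goldenRatio') ::ₘ
            (-goldenRatio') ::ₘ 0).map fun a => (X : ℝ[X]) - C a).prod := by
      rw [charpoly_tildeR 0]
      rw [show ((0:ℕ):ℝ) = (0:ℝ) from Nat.cast_zero]
      rw [cubic0_factor, quad_factor]
      simp only [Multiset.map_cons, Multiset.prod_cons, Multiset.map_zero,
        Multiset.prod_zero, _root_.map_neg, _root_.map_one, sub_neg_eq_add, pow_zero, one_mul,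
        show (C (2:ℝ) : ℝ[X]) = 2 from _root_.map_ofNat C 2]
      ring
    rw [hform, Polynomial.roots_multiset_prod_X_sub_C]
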